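/- arXiv:2311.09253 — 5 statements merged into one kernel-verified Lean document; each statement's English description precedes it below -/
import Mathlib

section
/- Suppose the degradation is non-invertible. Fix norms on ℝ^{n_x}, on ℝ^{n_y}, and on the product space ℝ^{n_x} × ℝ^{n_y}, and fix p ≥ 1. Then there exist constants ε₀ > 0 and c > 0, depending only on p_{X,Y}, the chosen norms and p (but not on the estimator), such that: for every measurable function f : ℝ^{n_y} → ℝ^{n_x} that is Lipschitz on the support of p_Y with Lipschitz constant K, if ε := W_p(p_{X,Y}, p_{f(Y),Y}) satisfies 0 < ε ≤ ε₀, then K ≥ c / √ε. Here p_{f(Y),Y} denotes the joint law of the pair (f(Y), Y). -/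
open MeasureTheory ProbabilityTheory
open scoped ENNReal NNReal

/-- The Wasserstein-`p` "distance" between two measures on a normed space `G`, as an `ℝ≥0∞`-valued
infimum over couplings `π` (measures on `G × G` with first marginal `μ` and second marginal `ν`)
of `(∫ ‖u - v‖^p dπ(u,v))^{1/p}`, written with the extended distance `edist u v = ‖u - v‖`. -/
noncomputable def wassersteinDist {G : Type*} [MeasurableSpace G] [NormedAddCommGroup G]
    (p : ℝ) (μ ν : Measure G) : ℝ≥0∞ :=
  ⨅ (π : Measure (G × G)) (_ : π.map Prod.fst = μ) (_ : π.map Prod.snd = ν),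
    (∫⁻ z, edist z.1 z.2 ^ p ∂π) ^ (1 / p)

/-- The support of a measure on a topological space: the set of points all of whose
neighborhoods have positive measure. -/
def measureSupport {α : Type*} [TopologicalSpace α] [MeasurableSpace α] (ν : Measure α) :
    Set α := {x | ∀ U ∈ nhds x, 0 < ν U}

section Aux

open Set Metric

lemma isClosed_measureSupport {α : Type*} [TopologicalSpace α] [MeasurableSpace α]
    (ν : Measure α) : IsClosed (measureSupport ν) := by
  rw [← isOpen_compl_iff, isOpen_iff_mem_nhds]
  intro x hx
  simp only [measureSupport, mem_compl_iff, mem_setOf_eq, not_forall] at hx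
  obtain ⟨U, hU, hU0⟩ := hx
  have h0 : ν (interior U) = 0 := by
    refine le_antisymm ?_ zero_le
    exact le_of_not_gt (fun h => hU0 (h.trans_le (measure_mono interior_subset)))
  filter_upwards [interior_mem_nhds.2 hU] with y hy
  simp only [measureSupport, mem_compl_iff, mem_setOf_eq, not_forall]
  exact ⟨interior U, isOpen_interior.mem_nhds hy, fun h => absurd h0 h.ne'⟩

lemma measure_compl_measureSupport {α : Type*} [TopologicalSpace α]
    [SecondCountableTopology α] [MeasurableSpace α] (ν : Measure α) :
    ν (measureSupport ν)ᶜ = 0 := by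
  obtain ⟨B, hBc, -, hB⟩ := TopologicalSpace.exists_countable_basis α
  have hsub : (measureSupport ν)ᶜ ⊆ ⋃₀ {U ∈ B | ν U = 0} := by
    intro x hx
    simp only [measureSupport, mem_compl_iff, mem_setOf_eq, not_forall] at hx
    obtain ⟨U, hU, hU0⟩ := hx
    have hU0' : ν U = 0 := le_antisymm (le_of_not_gt hU0) zero_le
    obtain ⟨t, htB, hxt, hts⟩ := hB.mem_nhds_iff.mp hU
    exact ⟨t, ⟨htB, le_antisymm (le_trans (measure_mono hts) hU0'.le) zero_le⟩, hxt⟩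
  refine measure_mono_null hsub ?_
  rw [measure_sUnion_null_iff (hBc.mono (sep_subset _ _))]
  exact fun s hs => hs.2

lemma exists_pair_of_ne_dirac {α : Type*} [MetricSpace α] [SecondCountableTopology α]
    [MeasurableSpace α] [BorelSpace α] (ρ : Measure α) [IsProbabilityMeasure ρ]
    (h : ∀ x : α, ρ ≠ Measure.dirac x) :
    ∃ a ∈ measureSupport ρ, ∃ b ∈ measureSupport ρ, a ≠ b := by
  by_contra h'
  push_neg at h'
  have hcompl := measure_compl_measureSupport ρ
  rcases Set.eq_empty_or_nonempty (measureSupport ρ) with he | ⟨a, ha⟩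
  · have h1 : ρ univ ≤ ρ (measureSupport ρ)ᶜ :=
      measure_mono (by rw [he]; simp)
    rw [hcompl, measure_univ] at h1
    exact absurd h1 (by simp)
  · refine h a (Measure.ext fun s hs => ?_)
    have hsub : ({a} : Set α)ᶜ ⊆ (measureSupport ρ)ᶜ := by
      intro x hx hmem
      exact hx (h' x hmem a ha)
    have h1 : ρ {a}ᶜ = 0 := measure_mono_null hsub hcompl
    have h2 : ρ {a} = 1 := by
      have := measure_add_measure_compl (measurableSet_singleton a) (μ := ρ)
      rw [h1, add_zero] at this; simpa using this
    rw [Measure.dirac_apply' _ hs]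
    by_cases hmem : a ∈ s
    · have : ρ s = 1 := le_antisymm prob_le_one
        (by calc (1:ℝ≥0∞) = ρ {a} := h2.symm
              _ ≤ ρ s := measure_mono (singleton_subset_iff.2 hmem))
      simp [this, indicator_of_mem hmem]
    · have : ρ s = 0 := by
        refine measure_mono_null (fun x hx => ?_) h1
        simp only [mem_compl_iff, mem_singleton_iff]
        intro hxa
        exact hmem (hxa ▸ hx)
      simp [this, indicator_of_notMem hmem]

variable {Ω E F : Type*} [MeasurableSpace Ω]
    [NormedAddCommGroup E] [NormedSpace ℝ E] [FiniteDimensional ℝ E]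
    [MeasurableSpace E] [BorelSpace E]
    [NormedAddCommGroup F] [NormedSpace ℝ F] [FiniteDimensional ℝ F]
    [MeasurableSpace F] [BorelSpace F]

omit [NormedAddCommGroup F] [NormedSpace ℝ F] [FiniteDimensional ℝ F] [BorelSpace F] in
lemma exists_spread_set
    (P : Measure Ω) [IsProbabilityMeasure P]
    (X : Ω → E) (Y : Ω → F) (hY : Measurable Y)
    (hni : ∃ S : Set F, MeasurableSet S ∧ 0 < P (Y ⁻¹' S) ∧
      ∀ y ∈ S, ∀ x : E, condDistrib X Y P y ≠ Measure.dirac x) :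
    ∃ (T : Set F) (r : ℝ) (θ : ℝ≥0∞), MeasurableSet T ∧ 0 < r ∧ 0 < θ ∧ θ ≠ ∞ ∧
      0 < (P.map Y) T ∧
      ∀ y ∈ T, ∀ a : E, θ ≤ condDistrib X Y P y ((Metric.closedBall a r)ᶜ) := by
  obtain ⟨S, hSm, hSpos, hSnd⟩ := hni
  set κ := condDistrib X Y P with hκ
  obtain ⟨D, hDc, hDd⟩ := TopologicalSpace.exists_countable_dense E
  set G : ℕ → ℕ → Set F := fun n m =>
    S ∩ ⋂ a ∈ D, {y | ((m + 1 : ℕ) : ℝ≥0∞)⁻¹ ≤ κ y (Metric.closedBall a (2/(n+1)))ᶜ} with hG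
  have hGm : ∀ n m, MeasurableSet (G n m) := by
    intro n m
    refine hSm.inter (MeasurableSet.biInter hDc fun a _ => ?_)
    exact Kernel.measurable_coe κ measurableSet_closedBall.compl measurableSet_Ici
  have hcover : S ⊆ ⋃ n, ⋃ m, G n m := by
    intro y hy
    have : IsProbabilityMeasure (κ y) := inferInstance
    obtain ⟨a, ha, b, hb, hab⟩ := exists_pair_of_ne_dirac (κ y) (hSnd y hy)
    have hd : 0 < dist a b := dist_pos.2 hab
    obtain ⟨n, hn⟩ := exists_nat_gt (8 / dist a b)
    have hn1 : (0:ℝ) < n + 1 := by positivity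
    have hRd : 2 / ((n:ℝ)+1) ≤ dist a b / 4 := by
      rw [div_le_div_iff₀ hn1 (by norm_num)]
      have h8 : 8 / dist a b < n + 1 := hn.trans (by linarith)
      rw [div_lt_iff₀ hd] at h8
      linarith
    set s' := dist a b / 4 with hs'
    have hs'0 : 0 < s' := by positivity
    have hθa : 0 < κ y (ball a s') := ha _ (ball_mem_nhds a hs'0)
    have hθb : 0 < κ y (ball b s') := hb _ (ball_mem_nhds b hs'0)
    set θ₀ := min (κ y (ball a s')) (κ y (ball b s')) with hθ₀
    have hθ₀pos : 0 < θ₀ := lt_min hθa hθb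
    obtain ⟨m, hm⟩ := ENNReal.exists_inv_nat_lt hθ₀pos.ne'
    have hm1 : ((m + 1 : ℕ) : ℝ≥0∞)⁻¹ ≤ θ₀ := by
      refine le_trans ?_ hm.le
      exact ENNReal.inv_le_inv.2 (by exact_mod_cast Nat.le_succ m)
    refine mem_iUnion.2 ⟨n, mem_iUnion.2 ⟨m, hy, ?_⟩⟩
    refine mem_iInter₂.2 fun c hc => ?_
    have hkey : ball a s' ⊆ (closedBall c (2/(n+1)))ᶜ ∨
        ball b s' ⊆ (closedBall c (2/(n+1)))ᶜ := by
      by_cases hcc : ∃ u ∈ ball a s', u ∈ closedBall c (2/(n+1))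
      · obtain ⟨u, hu, hu'⟩ := hcc
        right
        intro v hv hv'
        simp only [mem_closedBall, mem_ball] at *
        have : dist a b ≤ dist a u + dist u c + dist c v + dist v b := by
          calc dist a b ≤ dist a u + dist u b := dist_triangle _ _ _
            _ ≤ dist a u + (dist u c + dist c b) := by linarith [dist_triangle u c b]
            _ ≤ dist a u + dist u c + (dist c v + dist v b) := by
                linarith [dist_triangle c v b]
            _ = dist a u + dist u c + dist c v + dist v b := by ring
        have h1 : dist a u < s' := by rwa [dist_comm]
        have h2 : dist v b < s' := hv
        have h3 : dist c v ≤ 2/(n+1) := by rwa [dist_comm]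
        have h4 : s' = dist a b / 4 := rfl
        have h5 := hRd
        linarith
      · left
        intro u hu hu'
        exact hcc ⟨u, hu, hu'⟩
    rcases hkey with hsub | hsub
    · exact le_trans (hm1.trans (min_le_left _ _)) (measure_mono hsub)
    · exact le_trans (hm1.trans (min_le_right _ _)) (measure_mono hsub)
  have hνS : 0 < (P.map Y) S := by
    rw [Measure.map_apply hY hSm]; exact hSpos
  have : ∃ n m, (P.map Y) (G n m) ≠ 0 := by
    by_contra hall
    push_neg at hall
    have : (P.map Y) (⋃ n, ⋃ m, G n m) = 0 :=
      measure_iUnion_null fun n => measure_iUnion_null fun m => hall n m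
    exact hνS.ne' (measure_mono_null hcover this)
  obtain ⟨n, m, hGpos⟩ := this
  refine ⟨G n m, 1/(n+1), ((m + 1 : ℕ) : ℝ≥0∞)⁻¹, hGm n m, by positivity, ?_, ?_,
    pos_iff_ne_zero.2 hGpos, ?_⟩
  · simp
  · simp
  · intro y hy a
    obtain ⟨a', ha'⟩ := (Metric.dense_iff.1 hDd) a (1/(n+1)) (by positivity)
    obtain ⟨ha'ball, ha'D⟩ := ha'
    have hyD := mem_iInter₂.1 hy.2 a' ha'D
    refine le_trans hyD (measure_mono (compl_subset_compl.2 fun z hz => ?_))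
    simp only [mem_closedBall, mem_ball] at *
    calc dist z a' ≤ dist z a + dist a a' := dist_triangle _ _ _
      _ ≤ 1/(n+1) + 1/(n+1) := by
          have : dist a a' = dist a' a := dist_comm _ _
          linarith
      _ = 2/(n+1) := by ring

end Aux

/-- **the perception–robustness tradeoff.** Suppose the degradation is
non-invertible, the spaces `ℝ^{n_x}`, `ℝ^{n_y}` and `ℝ^{n_x} × ℝ^{n_y}` carry fixed norms, and
`p ≥ 1`. Then there exist constants `ε₀ > 0` and `c > 0`, depending only on `p_{X,Y}`, the norms
and `p` (they are chosen before the estimator is quantified), such that for every measurable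
`f : ℝ^{n_y} → ℝ^{n_x}` that is Lipschitz with constant `K` on the support of `p_Y`: if
`ε := W_p(p_{X,Y}, p_{f(Y),Y})` satisfies `0 < ε ≤ ε₀`, then `K ≥ c / √ε`. -/
theorem stmt0
    {Ω E F : Type*} [MeasurableSpace Ω]
    [NormedAddCommGroup E] [NormedSpace ℝ E] [FiniteDimensional ℝ E]
    [MeasurableSpace E] [BorelSpace E]
    [NormedAddCommGroup F] [NormedSpace ℝ F] [FiniteDimensional ℝ F]
    [MeasurableSpace F] [BorelSpace F]
    (P : Measure Ω) [IsProbabilityMeasure P]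
    (X : Ω → E) (Y : Ω → F) (hX : Measurable X) (hY : Measurable Y)
    (p : ℝ) (hp : 1 ≤ p)
    (hni : ∃ S : Set F, MeasurableSet S ∧ 0 < P (Y ⁻¹' S) ∧
      ∀ y ∈ S, ∀ x : E, condDistrib X Y P y ≠ Measure.dirac x) :
    ∃ ε₀ c : ℝ, 0 < ε₀ ∧ 0 < c ∧
      ∀ (f : F → E) (K : ℝ≥0), Measurable f →
        LipschitzOnWith K f (measureSupport (P.map Y)) →
        0 < wassersteinDist p (P.map (fun ω => (X ω, Y ω)))
              (P.map (fun ω => (f (Y ω), Y ω))) →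
        wassersteinDist p (P.map (fun ω => (X ω, Y ω)))
              (P.map (fun ω => (f (Y ω), Y ω))) ≤ ENNReal.ofReal ε₀ →
        c / Real.sqrt (wassersteinDist p (P.map (fun ω => (X ω, Y ω)))
              (P.map (fun ω => (f (Y ω), Y ω)))).toReal ≤ (K : ℝ) := by
  classical
  have hp0 : (0:ℝ) < p := lt_of_lt_of_le one_pos hp
  set ν := P.map Y with hν
  set κ := condDistrib X Y P with hκ
  set Z := measureSupport ν with hZdef
  obtain ⟨T, r, θ, hTm, hr, hθ0, hθtop, hTpos, hTspread⟩ :=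
    exists_spread_set P X Y hY hni
  have hdis : ν ⊗ₘ κ = P.map (fun ω => (Y ω, X ω)) := by
    rw [hκ, condDistrib_def, hν, ← Measure.fst_map_prodMk hX,
      Measure.disintegrate]
  set γ : ℝ≥0∞ := θ * ν T with hγ
  have hγ0 : 0 < γ := ENNReal.mul_pos hθ0.ne' hTpos.ne'
  have hγtop : γ ≠ ∞ := ENNReal.mul_ne_top hθtop (measure_ne_top _ _)
  set g : ℝ := (γ ^ (1/p)).toReal with hg
  have hgpos : 0 < g := by
    apply ENNReal.toReal_pos
    · exact (ENNReal.rpow_pos hγ0 hγtop).ne'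
    · exact ENNReal.rpow_ne_top_of_nonneg (by positivity) hγtop
  set β : ℝ := r * g / 2 with hβ
  have hβpos : 0 < β := by positivity
  refine ⟨min ((β/4)^2) 1, 3, lt_min (by positivity) one_pos, by norm_num, ?_⟩
  intro f K hf hLip hpos hle
  set μ := P.map (fun ω => (X ω, Y ω)) with hμ
  set ν' := P.map (fun ω => (f (Y ω), Y ω)) with hν'
  set ε := wassersteinDist p μ ν' with hε
  have hεtop : ε ≠ ∞ := ne_top_of_le_ne_top ENNReal.ofReal_ne_top hle
  set εr := ε.toReal with hεr
  have hεrpos : 0 < εr := ENNReal.toReal_pos hpos.ne' hεtop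
  have hεr0 : εr ≤ min ((β/4)^2) 1 :=
    ENNReal.toReal_le_of_le_ofReal (le_min (by positivity) zero_le_one) hle
  have hK0 : (0:ℝ) ≤ K := K.coe_nonneg
  have h1K : (0:ℝ) < 1 + K := by linarith
  set δ : ℝ := r / (1 + (K:ℝ)) with hδdef
  have hδpos : 0 < δ := by positivity
  have hδr : δ * (1 + (K:ℝ)) = r := by
    rw [hδdef]; field_simp
  -- extract a near-optimal coupling
  have h2ε : wassersteinDist p μ ν' < 2 * ε := by
    rw [← hε, two_mul]
    exact ENNReal.lt_add_right hεtop hpos.ne'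
  rw [wassersteinDist] at h2ε
  simp only [iInf_lt_iff] at h2ε
  obtain ⟨π, hπ1, hπ2, hπc⟩ := h2ε
  set C := ∫⁻ z, edist z.1 z.2 ^ p ∂π with hC
  have hCle : C ≤ (2*ε)^p := by
    have h1 : (C ^ (1/p)) ^ p ≤ (2*ε)^p := ENNReal.rpow_le_rpow hπc.le hp0.le
    rwa [← ENNReal.rpow_mul, one_div_mul_cancel hp0.ne', ENNReal.rpow_one] at h1
  -- Markov inequality for the bad set
  set B := {z : (E × F) × (E × F) | ENNReal.ofReal δ ≤ edist z.1 z.2} with hB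
  have hedistm : Measurable fun z : (E × F) × (E × F) => edist z.1 z.2 :=
    (continuous_fst.edist continuous_snd).measurable
  have hBmeas : MeasurableSet B := hedistm measurableSet_Ici
  have hMarkov : ENNReal.ofReal δ ^ p * π B ≤ C := by
    have hmeas : Measurable fun z : (E × F) × (E × F) => edist z.1 z.2 ^ p :=
      hedistm.pow_const p
    have hM := mul_meas_ge_le_lintegral₀ (μ := π) hmeas.aemeasurable (ENNReal.ofReal δ ^ p)
    refine le_trans (mul_le_mul_right (measure_mono ?_) _) hM
    intro z hz
    exact ENNReal.rpow_le_rpow hz hp0.le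
  -- the spread event
  set A₀ := (Prod.snd ⁻¹' T) ∩ {q : E × F | dist q.1 (f q.2) ≤ r}ᶜ with hA₀
  have hA₀m : MeasurableSet A₀ :=
    (measurable_snd hTm).inter
      ((measurable_fst.dist (hf.comp measurable_snd)) measurableSet_Iic).compl
  have hswapm : MeasurableSet (Prod.swap ⁻¹' A₀ : Set (F × E)) := measurable_swap hA₀m
  have hμA₀ : θ * ν T ≤ μ A₀ := by
    have h1 : μ A₀ = (ν ⊗ₘ κ) (Prod.swap ⁻¹' A₀) := by
      rw [hμ, Measure.map_apply (hX.prodMk hY) hA₀m, hdis,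
        Measure.map_apply (hY.prodMk hX) hswapm]
      rfl
    rw [h1, Measure.compProd_apply hswapm]
    have h2 : ∀ y ∈ T, θ ≤ κ y (Prod.mk y ⁻¹' (Prod.swap ⁻¹' A₀)) := by
      intro y hy
      have hset : Prod.mk y ⁻¹' (Prod.swap ⁻¹' A₀) = (Metric.closedBall (f y) r)ᶜ := by
        ext x
        simp only [hA₀, Set.mem_preimage, Prod.swap_prod_mk, Set.mem_inter_iff,
          Set.mem_compl_iff, Set.mem_setOf_eq, Metric.mem_closedBall]
        tauto
      rw [hset]; exact hTspread y hy (f y)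
    calc θ * ν T = ∫⁻ y in T, θ ∂ν := (setLIntegral_const T θ).symm
      _ ≤ ∫⁻ y in T, κ y (Prod.mk y ⁻¹' (Prod.swap ⁻¹' A₀)) ∂ν :=
          setLIntegral_mono (Kernel.measurable_kernel_prodMk_left hswapm) h2
      _ ≤ ∫⁻ y, κ y (Prod.mk y ⁻¹' (Prod.swap ⁻¹' A₀)) ∂ν :=
          setLIntegral_le_lintegral _ _
  -- null sets
  have hZmeas : MeasurableSet Z := (isClosed_measureSupport ν).measurableSet
  have hZc : ν Zᶜ = 0 := measure_compl_measureSupport ν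
  have hYZc : P (Y ⁻¹' Zᶜ) = 0 := by
    rw [← Measure.map_apply hY hZmeas.compl]; exact hZc
  set N₁ := (Prod.snd ⁻¹' Zᶜ : Set (E × F)) with hN₁
  have hN₁m : MeasurableSet N₁ := measurable_snd hZmeas.compl
  have hμN₁ : μ N₁ = 0 := by
    rw [hμ, Measure.map_apply (hX.prodMk hY) hN₁m]
    exact hYZc
  set M₂ := ({q : E × F | dist q.1 (f q.2) = 0} ∩ (Prod.snd ⁻¹' Z)) with hM₂
  have hM₂m : MeasurableSet M₂ :=
    ((measurable_fst.dist (hf.comp measurable_snd)) (measurableSet_singleton 0)).inter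
      (measurable_snd hZmeas)
  have hν'M₂ : ν' M₂ᶜ = 0 := by
    have hfY : Measurable fun ω => (f (Y ω), Y ω) := (hf.comp hY).prodMk hY
    rw [hν', Measure.map_apply hfY hM₂m.compl]
    refine measure_mono_null (fun ω hω => ?_) hYZc
    intro hZω
    exact hω ⟨by simp, hZω⟩
  -- the inclusion
  have hincl : (Prod.fst ⁻¹' A₀ : Set ((E × F) × (E × F))) ⊆
      B ∪ (Prod.fst ⁻¹' N₁) ∪ (Prod.snd ⁻¹' M₂ᶜ) := by
    intro z hz
    rw [Set.mem_union, Set.mem_union]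
    by_contra hcon
    push_neg at hcon
    obtain ⟨⟨hzB, hz1⟩, hz2⟩ := hcon
    have hlt : edist z.1 z.2 < ENNReal.ofReal δ := lt_of_not_ge hzB
    rw [Prod.edist_eq, max_lt_iff] at hlt
    obtain ⟨hlt1, hlt2⟩ := hlt
    rw [edist_lt_ofReal] at hlt1 hlt2
    have hz1Z : z.1.2 ∈ Z := by by_contra hconZ; exact hz1 hconZ
    have hz2M : z.2 ∈ M₂ := by by_contra hconM; exact hz2 hconM
    obtain ⟨hz2eq, hz2Z⟩ := hz2M
    have heq : z.2.1 = f z.2.2 := by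
      rwa [Set.mem_setOf_eq, dist_eq_zero] at hz2eq
    have hlipd : dist (f z.2.2) (f z.1.2) ≤ (K:ℝ) * dist z.2.2 z.1.2 :=
      hLip.dist_le_mul _ hz2Z _ hz1Z
    obtain ⟨hzT, hzfar⟩ := hz
    refine hzfar ?_
    show dist z.1.1 (f z.1.2) ≤ r
    have hdd : dist z.2.2 z.1.2 ≤ δ := by rw [dist_comm]; exact hlt2.le
    calc dist z.1.1 (f z.1.2) ≤ dist z.1.1 z.2.1 + dist z.2.1 (f z.1.2) :=
          dist_triangle _ _ _
      _ = dist z.1.1 z.2.1 + dist (f z.2.2) (f z.1.2) := by rw [heq]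
      _ ≤ δ + (K:ℝ) * δ := by
          have := mul_le_mul_of_nonneg_left hdd hK0
          have h' := hlipd.trans this
          linarith [hlt1.le]
      _ = δ * (1 + (K:ℝ)) := by ring
      _ = r := hδr
  -- chain the measure bounds
  have hπA : θ * ν T ≤ π B := by
    have h1 : π (Prod.fst ⁻¹' A₀) = μ A₀ := by
      rw [← Measure.map_apply measurable_fst hA₀m, hπ1]
    have h2 : π (Prod.fst ⁻¹' N₁) = 0 := by
      rw [← Measure.map_apply measurable_fst hN₁m, hπ1]; exact hμN₁
    have h3 : π (Prod.snd ⁻¹' M₂ᶜ) = 0 := by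
      rw [← Measure.map_apply measurable_snd hM₂m.compl, hπ2]; exact hν'M₂
    calc θ * ν T ≤ μ A₀ := hμA₀
      _ = π (Prod.fst ⁻¹' A₀) := h1.symm
      _ ≤ π (B ∪ Prod.fst ⁻¹' N₁ ∪ Prod.snd ⁻¹' M₂ᶜ) := measure_mono hincl
      _ ≤ π (B ∪ Prod.fst ⁻¹' N₁) + π (Prod.snd ⁻¹' M₂ᶜ) := measure_union_le _ _
      _ ≤ π B + π (Prod.fst ⁻¹' N₁) + π (Prod.snd ⁻¹' M₂ᶜ) :=
          add_le_add_left (measure_union_le _ _) _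
      _ = π B := by rw [h2, h3, add_zero, add_zero]
  -- combine
  have hkey : ENNReal.ofReal δ ^ p * γ ≤ (2*ε) ^ p :=
    le_trans (mul_le_mul_right hπA _) (hMarkov.trans hCle)
  have hkey2 : ENNReal.ofReal δ * γ ^ (1/p) ≤ 2 * ε := by
    have h := ENNReal.rpow_le_rpow hkey (by positivity : (0:ℝ) ≤ 1/p)
    rwa [ENNReal.mul_rpow_of_nonneg _ _ (by positivity), ← ENNReal.rpow_mul,
      mul_one_div_cancel hp0.ne', ENNReal.rpow_one, ← ENNReal.rpow_mul,
      mul_one_div_cancel hp0.ne', ENNReal.rpow_one] at h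
  have h2εtop : 2 * ε ≠ ∞ := ENNReal.mul_ne_top (by norm_num) hεtop
  have hreal : δ * g ≤ 2 * εr := by
    have h := ENNReal.toReal_mono h2εtop hkey2
    rwa [ENNReal.toReal_mul, ENNReal.toReal_ofReal hδpos.le, ENNReal.toReal_mul,
      ENNReal.toReal_ofNat] at h
  -- final elementary estimate
  have hβle : β ≤ εr * (1 + (K:ℝ)) := by
    rw [hβ]
    rw [hδdef, div_mul_eq_mul_div, div_le_iff₀ h1K] at hreal
    nlinarith
  set t := Real.sqrt εr with ht
  have ht0 : 0 < t := Real.sqrt_pos.2 hεrpos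
  have ht2 : t^2 = εr := Real.sq_sqrt hεrpos.le
  have ht1 : t ≤ 1 := by
    rw [ht, show (1:ℝ) = Real.sqrt 1 by rw [Real.sqrt_one]]
    exact Real.sqrt_le_sqrt (le_trans hεr0 (min_le_right _ _))
  have htβ : t ≤ β/4 := by
    have h := Real.sqrt_le_sqrt (le_trans hεr0 (min_le_left _ _))
    rw [Real.sqrt_sq (by positivity : (0:ℝ) ≤ β/4)] at h
    rw [ht]
    exact h
  rw [div_le_iff₀ ht0]
  have h4 : 4 * t ≤ t^2 * (1 + (K:ℝ)) := by
    calc 4*t ≤ β := by linarith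
      _ ≤ εr * (1 + (K:ℝ)) := hβle
      _ = t^2 * (1 + (K:ℝ)) := by rw [ht2]
  have h4' : 4 * t ≤ (t * (1 + (K:ℝ))) * t := by nlinarith
  have h5 : 4 ≤ t * (1 + (K:ℝ)) := le_of_mul_le_mul_right (by linarith) ht0
  nlinarith
end

section
/- If the degradation is non-invertible, then there exists β > 0 such that the degradation is β-ill-posed. -/
open MeasureTheory ProbabilityTheory Metric

lemma exists_two_support_points {E : Type*} [NormedAddCommGroup E]
    [MeasurableSpace E] [BorelSpace E] [SecondCountableTopology E]
    (μ : Measure E) [IsProbabilityMeasure μ] (h : ∀ x, μ ≠ Measure.dirac x) :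
    ∃ x₁ x₂ : E, x₁ ≠ x₂ ∧ (∀ r > 0, 0 < μ (ball x₁ r)) ∧ (∀ r > 0, 0 < μ (ball x₂ r)) := by
  classical
  set K : Set E := {x : E | ∀ r > 0, 0 < μ (ball x r)} with hK
  have hKc : μ Kᶜ = 0 := by
    have hmem : ∀ x : E, x ∈ Kᶜ → ∃ r > 0, μ (ball x r) = 0 := by
      intro x hx
      simp only [Set.mem_compl_iff, hK, Set.mem_setOf_eq, not_forall, not_lt,
        nonpos_iff_eq_zero] at hx
      obtain ⟨r, hr, h0⟩ := hx
      exact ⟨r, hr, h0⟩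
    choose! r hr h0 using hmem
    obtain ⟨T, hTc, hTU⟩ := TopologicalSpace.isOpen_iUnion_countable
      (fun x : ↥(Kᶜ) => ball (x : E) (r x)) (fun x => isOpen_ball)
    have hsub : Kᶜ ⊆ ⋃ x ∈ T, ball (x : E) (r ((x : E))) := by
      intro x hx
      have : x ∈ ⋃ (y : ↥(Kᶜ)), ball (y : E) (r y) :=
        Set.mem_iUnion.2 ⟨⟨x, hx⟩, mem_ball_self (hr x hx)⟩
      rw [← hTU] at this
      simpa using this
    refine measure_mono_null hsub ?_
    refine (measure_biUnion_null_iff hTc).2 ?_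
    intro x hx
    exact h0 x x.2
  by_contra hcon
  push_neg at hcon
  -- K has at most one element
  have hone : ∀ x₁ ∈ K, ∀ x₂ ∈ K, x₁ = x₂ := by
    intro x₁ hx₁ x₂ hx₂
    by_contra hne
    simp only [hK, Set.mem_setOf_eq] at hx₁ hx₂
    obtain ⟨r, hr, hle⟩ := hcon x₁ x₂ hne hx₁
    exact absurd (hx₂ r hr) (not_lt.2 hle)
  have hKne : K.Nonempty := by
    by_contra hemp
    rw [Set.not_nonempty_iff_eq_empty] at hemp
    rw [hemp, Set.compl_empty] at hKc
    simpa [measure_univ] using hKc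
  obtain ⟨x₀, hx₀⟩ := hKne
  have hsub : K ⊆ {x₀} := fun x hx => by simp [hone x hx x₀ hx₀]
  have hc0 : μ {x₀}ᶜ = 0 :=
    measure_mono_null (Set.compl_subset_compl.2 hsub) hKc
  have h1 : μ {x₀} = 1 := (prob_compl_eq_zero_iff (measurableSet_singleton x₀)).1 hc0
  refine h x₀ (Measure.ext fun s hs => ?_)
  rw [Measure.dirac_apply' _ hs]
  by_cases hxs : x₀ ∈ s
  · have : μ s = 1 := le_antisymm prob_le_one
      (by rw [← h1]; exact measure_mono (Set.singleton_subset_iff.2 hxs))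
    simp [this, hxs]
  · have : μ s = 0 := measure_mono_null (fun z hz => by
      simp only [Set.mem_compl_iff, Set.mem_singleton_iff]
      rintro rfl; exact hxs hz) hc0
    simp [this, hxs]

/-- If the degradation is non-invertible (there is a set `S` of measurements
with positive probability on which the regular conditional distribution `p_{X|Y}(·|y)` is not a
Dirac measure), then there exists `β > 0` such that the degradation is `β`-ill-posed: there is a
measurable set `Sy` with `P(Y ∈ Sy) > 0` such that for every `y ∈ Sy` there are measurable sets
`Q₁, Q₂` each of positive conditional probability, with `‖x₁ - x₂‖ ≥ β` for all
`x₁ ∈ Q₁, x₂ ∈ Q₂`. -/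
theorem stmt1
    {Ω E F : Type*} [MeasurableSpace Ω]
    [NormedAddCommGroup E] [NormedSpace ℝ E] [FiniteDimensional ℝ E]
    [MeasurableSpace E] [BorelSpace E]
    [NormedAddCommGroup F] [NormedSpace ℝ F] [FiniteDimensional ℝ F]
    [MeasurableSpace F] [BorelSpace F]
    (P : Measure Ω) [IsProbabilityMeasure P]
    (X : Ω → E) (Y : Ω → F) (hX : Measurable X) (hY : Measurable Y)
    (hni : ∃ S : Set F, MeasurableSet S ∧ 0 < P (Y ⁻¹' S) ∧
      ∀ y ∈ S, ∀ x : E, condDistrib X Y P y ≠ Measure.dirac x) :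
    ∃ β : ℝ, 0 < β ∧ ∃ Sy : Set F, MeasurableSet Sy ∧ 0 < P (Y ⁻¹' Sy) ∧
      ∀ y ∈ Sy, ∃ Q₁ Q₂ : Set E, MeasurableSet Q₁ ∧ MeasurableSet Q₂ ∧
        0 < condDistrib X Y P y Q₁ ∧ 0 < condDistrib X Y P y Q₂ ∧
        ∀ x₁ ∈ Q₁, ∀ x₂ ∈ Q₂, β ≤ ‖x₁ - x₂‖ := by
  classical
  obtain ⟨S, hSm, hSpos, hnd⟩ := hni
  set κ := condDistrib X Y P with hκ
  obtain ⟨D, hDc, hDd⟩ := TopologicalSpace.exists_countable_dense E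
  -- index type
  let ι := ↥D × ↥D × {q : ℚ // 0 < q}
  haveI : Countable ↥D := hDc.to_subtype
  haveI : Countable ι := by infer_instance
  let A : ι → Set F := fun i =>
    {y | 3 * (i.2.2 : ℝ) ≤ ‖(i.1 : E) - (i.2.1 : E)‖ ∧
      0 < κ y (ball (i.1 : E) (i.2.2 : ℚ)) ∧ 0 < κ y (ball (i.2.1 : E) (i.2.2 : ℚ))}
  have hAm : ∀ i, MeasurableSet (A i) := by
    intro i
    by_cases hsep : 3 * (i.2.2 : ℝ) ≤ ‖(i.1 : E) - (i.2.1 : E)‖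
    · have h1 : Measurable fun y => κ y (ball (i.1 : E) (i.2.2 : ℚ)) :=
        Kernel.measurable_coe κ measurableSet_ball
      have h2 : Measurable fun y => κ y (ball (i.2.1 : E) (i.2.2 : ℚ)) :=
        Kernel.measurable_coe κ measurableSet_ball
      have : A i = {y | 0 < κ y (ball (i.1 : E) (i.2.2 : ℚ))} ∩
          {y | 0 < κ y (ball (i.2.1 : E) (i.2.2 : ℚ))} := by
        ext y; simp [A, hsep, and_assoc]
      rw [this]
      exact (measurableSet_lt measurable_const h1).inter
        (measurableSet_lt measurable_const h2)
    · have : A i = ∅ := by ext y; simp [A, hsep]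
      simp [this]
  have hcover : S ⊆ ⋃ i, A i := by
    intro y hy
    obtain ⟨x₁, x₂, hne, hb₁, hb₂⟩ := exists_two_support_points (κ y) (hnd y hy)
    set δ := ‖x₁ - x₂‖ with hδ
    have hδpos : 0 < δ := by
      simpa [hδ] using sub_ne_zero.2 hne
    obtain ⟨q, hq0, hq5⟩ := exists_rat_btwn (show (0:ℝ) < δ/5 by linarith)
    have hq0' : (0:ℚ) < q := by exact_mod_cast hq0
    obtain ⟨d₁, hd₁D, hd₁⟩ := hDd.exists_dist_lt x₁ (show (0:ℝ) < q/2 by positivity)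
    obtain ⟨d₂, hd₂D, hd₂⟩ := hDd.exists_dist_lt x₂ (show (0:ℝ) < q/2 by positivity)
    refine Set.mem_iUnion.2 ⟨⟨⟨d₁, hd₁D⟩, ⟨d₂, hd₂D⟩, ⟨q, hq0'⟩⟩, ?_, ?_, ?_⟩
    · -- separation: 3q ≤ ‖d₁ - d₂‖
      show 3 * ((q : ℚ) : ℝ) ≤ ‖d₁ - d₂‖
      rw [← dist_eq_norm]
      have ht := dist_triangle4 x₁ d₁ d₂ x₂
      have hx : dist x₁ x₂ = δ := dist_eq_norm x₁ x₂
      have hc : dist d₂ x₂ = dist x₂ d₂ := dist_comm _ _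
      linarith
    · -- positivity 1
      refine lt_of_lt_of_le (hb₁ (q/2) (by positivity)) (measure_mono ?_)
      intro p hp
      have : dist p d₁ < q := by
        calc dist p d₁ ≤ dist p x₁ + dist x₁ d₁ := dist_triangle _ _ _
          _ < q/2 + q/2 := add_lt_add (mem_ball.1 hp) hd₁
          _ = q := by ring
      exact mem_ball.2 (by exact_mod_cast this)
    · refine lt_of_lt_of_le (hb₂ (q/2) (by positivity)) (measure_mono ?_)
      intro p hp
      have : dist p d₂ < q := by
        calc dist p d₂ ≤ dist p x₂ + dist x₂ d₂ := dist_triangle _ _ _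
          _ < q/2 + q/2 := add_lt_add (mem_ball.1 hp) hd₂
          _ = q := by ring
      exact mem_ball.2 (by exact_mod_cast this)
  -- extract an index with positive measure
  have : ∃ i, 0 < P (Y ⁻¹' A i) := by
    by_contra hno
    push_neg at hno
    simp only [nonpos_iff_eq_zero] at hno
    have : P (Y ⁻¹' S) = 0 := by
      refine measure_mono_null ?_ (measure_iUnion_null (fun i => hno i))
      intro w hw
      obtain ⟨i, hi⟩ := Set.mem_iUnion.1 (hcover hw)
      exact Set.mem_iUnion.2 ⟨i, hi⟩
    exact absurd this hSpos.ne'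
  obtain ⟨i, hipos⟩ := this
  refine ⟨(i.2.2 : ℚ), by exact_mod_cast i.2.2.2, A i, hAm i, hipos, ?_⟩
  intro y hy
  obtain ⟨hsep, h1, h2⟩ := hy
  refine ⟨ball (i.1 : E) (i.2.2 : ℚ), ball (i.2.1 : E) (i.2.2 : ℚ),
    measurableSet_ball, measurableSet_ball, h1, h2, ?_⟩
  intro x₁ hx₁ x₂ hx₂
  have e1 : dist x₁ (i.1 : E) < (i.2.2 : ℚ) := mem_ball.1 hx₁
  have e2 : dist x₂ (i.2.1 : E) < (i.2.2 : ℚ) := mem_ball.1 hx₂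
  have : ‖(i.1 : E) - (i.2.1 : E)‖ ≤ dist x₁ (i.1 : E) + ‖x₁ - x₂‖ + dist x₂ (i.2.1 : E) := by
    have := dist_triangle4 (i.1 : E) x₁ x₂ (i.2.1 : E)
    simpa [dist_eq_norm, dist_comm, norm_sub_rev] using this
  nlinarith [hsep]
end

section
/- Suppose the degradation is non-invertible. Then for every measurable function f : ℝ^{n_y} → ℝ^{n_x}, the joint law of (f(Y), Y) is different from the joint law of (X, Y); that is, no deterministic estimator X̂ = f(Y) can satisfy p_{X̂,Y} = p_{X,Y}. -/
open MeasureTheory ProbabilityTheory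

lemma compProd_deterministic_aux {α β : Type*} [MeasurableSpace α] [MeasurableSpace β]
    (μ : Measure α) [SFinite μ] {f : α → β} (hf : Measurable f) :
    μ ⊗ₘ Kernel.deterministic f hf = μ.map (fun a => (a, f a)) := by
  ext s hs
  rw [Measure.compProd_apply hs,
    Measure.map_apply (show Measurable fun a => (a, f a) from measurable_id.prodMk hf) hs]
  calc ∫⁻ a, (Kernel.deterministic f hf a) (Prod.mk a ⁻¹' s) ∂μ
      = ∫⁻ a, Set.indicator ((fun a => (a, f a)) ⁻¹' s) 1 a ∂μ := by
        refine lintegral_congr fun a => ?_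
        rw [Kernel.deterministic_apply, Measure.dirac_apply' _ (measurable_prodMk_left hs)]
        rfl
    _ = μ ((fun a => (a, f a)) ⁻¹' s) := by
        rw [lintegral_indicator_one ((show Measurable fun a => (a, f a) from measurable_id.prodMk hf) hs)]

/-- If the degradation is non-invertible, then no deterministic estimator
`X̂ = f(Y)` can satisfy `p_{X̂,Y} = p_{X,Y}`: for every measurable `f`, the joint law of
`(f(Y), Y)` differs from the joint law of `(X, Y)`. -/
theorem stmt6
    {Ω E F : Type*} [MeasurableSpace Ω]
    [NormedAddCommGroup E] [NormedSpace ℝ E] [FiniteDimensional ℝ E]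
    [MeasurableSpace E] [BorelSpace E]
    [NormedAddCommGroup F] [NormedSpace ℝ F] [FiniteDimensional ℝ F]
    [MeasurableSpace F] [BorelSpace F]
    (P : Measure Ω) [IsProbabilityMeasure P]
    (X : Ω → E) (Y : Ω → F) (hX : Measurable X) (hY : Measurable Y)
    (hni : ∃ S : Set F, MeasurableSet S ∧ 0 < P (Y ⁻¹' S) ∧
      ∀ y ∈ S, ∀ x : E, condDistrib X Y P y ≠ Measure.dirac x) :
    ∀ f : F → E, Measurable f →
      P.map (fun ω => (f (Y ω), Y ω)) ≠ P.map (fun ω => (X ω, Y ω)) := by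
  intro f hf h
  obtain ⟨S, hSm, hSpos, hS⟩ := hni
  -- swap the joint laws
  have hswap : P.map (fun ω => (Y ω, X ω)) = P.map (fun ω => (Y ω, f (Y ω))) := by
    calc P.map (fun ω => (Y ω, X ω))
        = (P.map (fun ω => (X ω, Y ω))).map Prod.swap :=
          (Measure.map_map measurable_swap (hX.prodMk hY)).symm
      _ = (P.map (fun ω => (f (Y ω), Y ω))).map Prod.swap := by rw [h]
      _ = P.map (fun ω => (Y ω, f (Y ω))) :=
          Measure.map_map measurable_swap ((hf.comp hY).prodMk hY)
  have hmapY : P.map (fun ω => (Y ω, f (Y ω))) = P.map Y ⊗ₘ Kernel.deterministic f hf := by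
    rw [compProd_deterministic_aux (P.map Y) hf,
      Measure.map_map (show Measurable fun a => (a, f a) from measurable_id.prodMk hf) hY]
    rfl
  have key : ∀ᵐ y ∂P.map Y, Kernel.deterministic f hf y = condDistrib X Y P y :=
    (condDistrib_ae_eq_of_measure_eq_compProd_of_measurable hY hX (hswap.trans hmapY)).mono fun y hy => hy.symm
  have hSpos' : 0 < (P.map Y) S := by
    rwa [Measure.map_apply hY hSm]
  -- the a.e. set meets S
  have : ∃ y ∈ S, Kernel.deterministic f hf y = condDistrib X Y P y := by
    by_contra hc
    push_neg at hc
    have : (P.map Y) S = 0 := by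
      refine measure_mono_null (fun y hy => ?_) (ae_iff.mp key)
      exact fun hmem => hc y hy hmem
    exact absurd this hSpos'.ne'
  obtain ⟨y, hyS, hy⟩ := this
  exact hS y hyS (f y) (by rw [← hy, Kernel.deterministic_apply])
end

section
/- Suppose the degradation is non-invertible, fix a norm on ℝ^{n_x} × ℝ^{n_y} and p ≥ 1. Then for every measurable function f : ℝ^{n_y} → ℝ^{n_x}, the Wasserstein-p distance between the joint law of (X, Y) and the joint law of (f(Y), Y) is strictly positive: W_p(p_{X,Y}, p_{f(Y),Y}) > 0 (possibly +∞). -/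
open MeasureTheory ProbabilityTheory
open scoped ENNReal

/-- Composing a measure with a deterministic kernel is the pushforward under the graph map. -/
lemma compProd_deterministic_eq_map {α β : Type*} [MeasurableSpace α] [MeasurableSpace β]
    (m : Measure α) [SFinite m] {f : α → β} (hf : Measurable f) :
    m ⊗ₘ Kernel.deterministic f hf = m.map (fun x => (x, f x)) := by
  ext s hs
  rw [Measure.compProd_apply hs,
    Measure.map_apply (show Measurable fun x => (x, f x) from measurable_id.prodMk hf) hs]
  have key : ∀ a, Kernel.deterministic f hf a (Prod.mk a ⁻¹' s)
      = ((fun x => (x, f x)) ⁻¹' s).indicator (fun _ => (1 : ℝ≥0∞)) a := by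
    intro a
    rw [Kernel.deterministic_apply' hf a (measurable_prodMk_left hs)]
    by_cases h : (a, f a) ∈ s <;> simp [Set.indicator, h]
  simp_rw [key]
  rw [lintegral_indicator_const
    (show MeasurableSet ((fun x => (x, f x)) ⁻¹' s) from (measurable_id.prodMk hf) hs), one_mul]

/-- If a coupling `π` has marginals `μ` and `ν`, and the pair `(B, ε)` witnesses that the
Lévy–Prokhorov condition fails (first inequality), then the transport cost is bounded below. -/
lemma coupling_cost_lower_left {G : Type*} [NormedAddCommGroup G] [MeasurableSpace G]
    [BorelSpace G] {μ ν : Measure G} [IsFiniteMeasure ν] (π : Measure (G × G))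
    (h1 : π.map Prod.fst = μ) (h2 : π.map Prod.snd = ν)
    {ε : ℝ≥0∞} (hεtop : ε ≠ ∞) {B : Set G} (hB : MeasurableSet B)
    (hgap : ¬ μ B ≤ ν (Metric.thickening ε.toReal B) + ε)
    {p : ℝ} (hp : 0 ≤ p) :
    ε ^ p * ε ≤ ∫⁻ z, edist z.1 z.2 ^ p ∂π := by
  set T := Metric.thickening ε.toReal B with hT_def
  have hT : MeasurableSet T := Metric.isOpen_thickening.measurableSet
  set A : Set (G × G) := (Prod.fst ⁻¹' B) ∩ (Prod.snd ⁻¹' T)ᶜ with hA_def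
  have hA : MeasurableSet A := ((measurable_fst hB).inter (measurable_snd hT).compl)
  have hedist : ∀ z ∈ A, ε ≤ edist z.1 z.2 := by
    rintro ⟨x, y⟩ ⟨hx, hy⟩
    have hy' : ¬ Metric.infEDist y B < ENNReal.ofReal ε.toReal := by
      simpa [hT_def, Metric.mem_thickening_iff_infEdist_lt] using hy
    calc ε = ENNReal.ofReal ε.toReal := (ENNReal.ofReal_toReal hεtop).symm
    _ ≤ Metric.infEDist y B := not_lt.mp hy'
    _ ≤ edist y x := Metric.infEDist_le_edist_of_mem hx
    _ = edist x y := edist_comm y x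
  have hπA : ε < π A := by
    have hμB : μ B ≤ π A + ν T := by
      have hsub : Prod.fst ⁻¹' B ⊆ A ∪ Prod.snd ⁻¹' T := by
        intro z hz
        by_cases h : z ∈ Prod.snd ⁻¹' T
        · exact Or.inr h
        · exact Or.inl ⟨hz, h⟩
      calc μ B = π (Prod.fst ⁻¹' B) := by rw [← h1, Measure.map_apply measurable_fst hB]
      _ ≤ π (A ∪ Prod.snd ⁻¹' T) := measure_mono hsub
      _ ≤ π A + π (Prod.snd ⁻¹' T) := measure_union_le _ _
      _ = π A + ν T := by rw [← h2, Measure.map_apply measurable_snd hT]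
    have hlt : ν T + ε < μ B := not_le.mp hgap
    have : ε + ν T < π A + ν T := by
      calc ε + ν T = ν T + ε := add_comm _ _
      _ < μ B := hlt
      _ ≤ π A + ν T := hμB
    exact (ENNReal.add_lt_add_iff_right (measure_ne_top ν T)).mp this
  calc ε ^ p * ε ≤ ε ^ p * π A := mul_le_mul_right hπA.le _
  _ = ∫⁻ z, A.indicator (fun _ => ε ^ p) z ∂π := (lintegral_indicator_const hA _).symm
  _ ≤ ∫⁻ z, edist z.1 z.2 ^ p ∂π := by
      apply lintegral_mono
      intro z
      by_cases hz : z ∈ A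
      · rw [Set.indicator_of_mem hz]
        exact ENNReal.rpow_le_rpow (hedist z hz) hp
      · rw [Set.indicator_of_notMem hz]
        exact zero_le

/-- Symmetric version of `coupling_cost_lower_left`, for the second Lévy–Prokhorov inequality. -/
lemma coupling_cost_lower_right {G : Type*} [NormedAddCommGroup G] [MeasurableSpace G]
    [BorelSpace G] {μ ν : Measure G} [IsFiniteMeasure μ] (π : Measure (G × G))
    (h1 : π.map Prod.fst = μ) (h2 : π.map Prod.snd = ν)
    {ε : ℝ≥0∞} (hεtop : ε ≠ ∞) {B : Set G} (hB : MeasurableSet B)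
    (hgap : ¬ ν B ≤ μ (Metric.thickening ε.toReal B) + ε)
    {p : ℝ} (hp : 0 ≤ p) :
    ε ^ p * ε ≤ ∫⁻ z, edist z.1 z.2 ^ p ∂π := by
  set T := Metric.thickening ε.toReal B with hT_def
  have hT : MeasurableSet T := Metric.isOpen_thickening.measurableSet
  set A : Set (G × G) := (Prod.snd ⁻¹' B) ∩ (Prod.fst ⁻¹' T)ᶜ with hA_def
  have hA : MeasurableSet A := ((measurable_snd hB).inter (measurable_fst hT).compl)
  have hedist : ∀ z ∈ A, ε ≤ edist z.1 z.2 := by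
    rintro ⟨x, y⟩ ⟨hy, hx⟩
    have hx' : ¬ Metric.infEDist x B < ENNReal.ofReal ε.toReal := by
      simpa [hT_def, Metric.mem_thickening_iff_infEdist_lt] using hx
    calc ε = ENNReal.ofReal ε.toReal := (ENNReal.ofReal_toReal hεtop).symm
    _ ≤ Metric.infEDist x B := not_lt.mp hx'
    _ ≤ edist x y := Metric.infEDist_le_edist_of_mem hy
  have hπA : ε < π A := by
    have hνB : ν B ≤ π A + μ T := by
      have hsub : Prod.snd ⁻¹' B ⊆ A ∪ Prod.fst ⁻¹' T := by
        intro z hz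
        by_cases h : z ∈ Prod.fst ⁻¹' T
        · exact Or.inr h
        · exact Or.inl ⟨hz, h⟩
      calc ν B = π (Prod.snd ⁻¹' B) := by rw [← h2, Measure.map_apply measurable_snd hB]
      _ ≤ π (A ∪ Prod.fst ⁻¹' T) := measure_mono hsub
      _ ≤ π A + π (Prod.fst ⁻¹' T) := measure_union_le _ _
      _ = π A + μ T := by rw [← h1, Measure.map_apply measurable_fst hT]
    have hlt : μ T + ε < ν B := not_le.mp hgap
    have : ε + μ T < π A + μ T := by
      calc ε + μ T = μ T + ε := add_comm _ _
      _ < ν B := hlt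
      _ ≤ π A + μ T := hνB
    exact (ENNReal.add_lt_add_iff_right (measure_ne_top μ T)).mp this
  calc ε ^ p * ε ≤ ε ^ p * π A := mul_le_mul_right hπA.le _
  _ = ∫⁻ z, A.indicator (fun _ => ε ^ p) z ∂π := (lintegral_indicator_const hA _).symm
  _ ≤ ∫⁻ z, edist z.1 z.2 ^ p ∂π := by
      apply lintegral_mono
      intro z
      by_cases hz : z ∈ A
      · rw [Set.indicator_of_mem hz]
        exact ENNReal.rpow_le_rpow (hedist z hz) hp
      · rw [Set.indicator_of_notMem hz]
        exact zero_le

/-- If two probability measures on a normed (Borel) space differ, their Wasserstein-`p`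
distance is strictly positive. -/
lemma wassersteinDist_pos_of_ne {G : Type*} [NormedAddCommGroup G]
    [MeasurableSpace G] [BorelSpace G]
    {μ ν : Measure G} [IsProbabilityMeasure μ] [IsProbabilityMeasure ν]
    (hμν : μ ≠ ν) {p : ℝ} (hp : 1 ≤ p) : 0 < wassersteinDist p μ ν := by
  have hp0 : (0 : ℝ) ≤ p := le_trans zero_le_one hp
  -- The Lévy–Prokhorov distance between `μ` and `ν` is positive.
  have hL0 : levyProkhorovEDist μ ν ≠ 0 := by
    intro hL
    apply hμν
    apply MeasureTheory.ext_of_generate_finite _ ?_ isPiSystem_isClosed ?_ (by simp)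
    · rw [BorelSpace.measurable_eq (α := G), borel_eq_generateFrom_isClosed]
    · intro A A_closed
      exact measure_eq_measure_of_levyProkhorovEDist_eq_zero_of_isClosed hL A_closed
        ⟨1, one_pos, measure_ne_top _ _⟩ ⟨1, one_pos, measure_ne_top _ _⟩
  set L := levyProkhorovEDist μ ν with hLdef
  have hLtop : L ≠ ∞ := levyProkhorovEDist_ne_top μ ν
  set ε : ℝ≥0∞ := L / 2 with hεdef
  have hε0 : ε ≠ 0 := (ENNReal.half_pos hL0).ne'
  have hεtop : ε ≠ ∞ := (lt_of_le_of_lt ENNReal.half_le_self hLtop.lt_top).ne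
  have hεL : ε < L := ENNReal.half_lt_self hL0 hLtop
  -- Obtain a witness set `B` for which the Lévy–Prokhorov condition at level `ε` fails.
  obtain ⟨B, hB, hBgap⟩ : ∃ B, MeasurableSet B ∧
      (¬ μ B ≤ ν (Metric.thickening ε.toReal B) + ε ∨
        ¬ ν B ≤ μ (Metric.thickening ε.toReal B) + ε) := by
    by_contra hcon
    push_neg at hcon
    have hmem : ε ∈ {ε : ℝ≥0∞ | ∀ B, MeasurableSet B →
        μ B ≤ ν (Metric.thickening ε.toReal B) + ε ∧
          ν B ≤ μ (Metric.thickening ε.toReal B) + ε} := fun B hBm => hcon B hBm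
    exact absurd (sInf_le hmem) (not_le.mpr hεL)
  -- Positivity of the uniform lower bound.
  have hc0 : (0 : ℝ≥0∞) < (ε ^ p * ε) ^ (1 / p) := by
    apply ENNReal.rpow_pos
    · exact ENNReal.mul_pos (ENNReal.rpow_pos (pos_iff_ne_zero.mpr hε0) hεtop).ne' hε0
    · exact ENNReal.mul_ne_top (ENNReal.rpow_ne_top_of_nonneg hp0 hεtop) hεtop
  refine lt_of_lt_of_le hc0 ?_
  refine le_iInf fun π => le_iInf fun h1 => le_iInf fun h2 => ?_
  rcases hBgap with h | h
  · exact ENNReal.rpow_le_rpow (coupling_cost_lower_left π h1 h2 hεtop hB h hp0)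
      (by positivity)
  · exact ENNReal.rpow_le_rpow (coupling_cost_lower_right π h1 h2 hεtop hB h hp0)
      (by positivity)

/-- If the degradation is non-invertible, then for every measurable
`f : ℝ^{n_y} → ℝ^{n_x}`, the Wasserstein-`p` distance between the joint law of `(X, Y)` and the
joint law of `(f(Y), Y)` is strictly positive (possibly `+∞`). -/
theorem stmt7
    {Ω E F : Type*} [MeasurableSpace Ω]
    [NormedAddCommGroup E] [NormedSpace ℝ E] [FiniteDimensional ℝ E]
    [MeasurableSpace E] [BorelSpace E]
    [NormedAddCommGroup F] [NormedSpace ℝ F] [FiniteDimensional ℝ F]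
    [MeasurableSpace F] [BorelSpace F]
    (P : Measure Ω) [IsProbabilityMeasure P]
    (X : Ω → E) (Y : Ω → F) (hX : Measurable X) (hY : Measurable Y)
    (p : ℝ) (hp : 1 ≤ p)
    (hni : ∃ S : Set F, MeasurableSet S ∧ 0 < P (Y ⁻¹' S) ∧
      ∀ y ∈ S, ∀ x : E, condDistrib X Y P y ≠ Measure.dirac x) :
    ∀ f : F → E, Measurable f →
      0 < wassersteinDist p (P.map (fun ω => (X ω, Y ω)))
        (P.map (fun ω => (f (Y ω), Y ω))) := by
  intro f hf
  have hXY : Measurable fun ω => (X ω, Y ω) := hX.prodMk hY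
  have hfY : Measurable fun ω => (f (Y ω), Y ω) := (hf.comp hY).prodMk hY
  haveI : IsProbabilityMeasure (P.map (fun ω => (X ω, Y ω))) :=
    Measure.isProbabilityMeasure_map hXY.aemeasurable
  haveI : IsProbabilityMeasure (P.map (fun ω => (f (Y ω), Y ω))) :=
    Measure.isProbabilityMeasure_map hfY.aemeasurable
  refine wassersteinDist_pos_of_ne ?_ hp
  intro heq
  obtain ⟨S, hS, hSpos, hSd⟩ := hni
  -- Swap coordinates in the equality of joint laws.
  have hswap : P.map (fun ω => (Y ω, X ω)) = P.map (fun ω => (Y ω, f (Y ω))) := by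
    have h1 : (P.map (fun ω => (X ω, Y ω))).map Prod.swap = P.map (fun ω => (Y ω, X ω)) :=
      Measure.map_map measurable_swap hXY
    have h2 : (P.map (fun ω => (f (Y ω), Y ω))).map Prod.swap
        = P.map (fun ω => (Y ω, f (Y ω))) :=
      Measure.map_map measurable_swap hfY
    rw [← h1, ← h2, heq]
  -- Rewrite the right-hand side as a composition–product with a deterministic kernel.
  have hcomp : P.map (fun ω => (Y ω, f (Y ω))) = P.map Y ⊗ₘ Kernel.deterministic f hf := by
    rw [compProd_deterministic_eq_map (P.map Y) hf,
      Measure.map_map (show Measurable fun x : F => (x, f x) from measurable_id.prodMk hf) hY]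
    rfl
  -- Uniqueness of disintegration.
  have hae : ∀ᵐ y ∂P.map Y, Kernel.deterministic f hf y = condDistrib X Y P y :=
    (condDistrib_ae_eq_of_measure_eq_compProd_of_measurable hY hX
      (hswap.trans hcomp)).mono fun y h => h.symm
  -- But on `S` the conditional distribution is not a Dirac measure, contradiction.
  have hSsub : S ⊆ {y | ¬ Kernel.deterministic f hf y = condDistrib X Y P y} := by
    intro y hy hcontra
    exact hSd y hy (f y) (by rw [← hcontra, Kernel.deterministic_apply])
  have hS0 : (P.map Y) S = 0 := by
    refine measure_mono_null hSsub ?_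
    rw [Filter.Eventually, mem_ae_iff] at hae
    exact hae
  rw [Measure.map_apply hY hS] at hS0
  exact absurd hS0 hSpos.ne'
end

section
/- Let X and X̂ be square-integrable real-valued random variables and let Y be a random vector, all on the same probability space, such that X and X̂ are conditionally independent given the σ-algebra generated by Y. If moreover X̂ is a posterior sampler, i.e. the regular conditional distributions satisfy p_{X̂|Y}(·|y) = p_{X|Y}(·|y) for p_Y-almost every y, then almost surely E[(X − X̂)² | Y] = 2·(E[X² | Y] − (E[X | Y])²), i.e. the conditional mean squared error of X̂ equals twice the conditional variance of X given Y. -/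
open MeasureTheory ProbabilityTheory Filter

/-- Monotone a.e. convergence of conditional expectations of truncations. -/
lemma tendsto_condexp_min {Ω : Type*} {m m0 : MeasurableSpace Ω}
    (hm : m ≤ m0) (P : Measure Ω) [IsProbabilityMeasure P] {h : Ω → ℝ}
    (hmeas : Measurable h) (hnn : ∀ ω, 0 ≤ h ω) (hint : Integrable h P) :
    ∀ᵐ ω ∂P, Tendsto (fun n : ℕ => (P[fun ω' => min (h ω') n | m]) ω) atTop
      (nhds ((P[h | m]) ω)) := by
  have hcmeas : ∀ n : ℕ, AEStronglyMeasurable (P[fun ω' => min (h ω') n | m]) P :=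
    fun n => (stronglyMeasurable_condExp.mono hm).aestronglyMeasurable
  have hn_int : ∀ n : ℕ, Integrable (fun ω => min (h ω) n) P := by
    intro n
    refine hint.mono ((hmeas.min measurable_const).aestronglyMeasurable) ?_
    filter_upwards with ω
    rw [Real.norm_eq_abs, Real.norm_eq_abs, abs_of_nonneg (le_min (hnn ω) n.cast_nonneg),
      abs_of_nonneg (hnn ω)]
    exact min_le_left _ _
  -- a.e. monotonicity, bounds
  have hmono : ∀ᵐ ω ∂P, ∀ n : ℕ,
      (P[fun ω' => min (h ω') n | m]) ω ≤ (P[fun ω' => min (h ω') ((n+1 : ℕ)) | m]) ω := by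
    rw [MeasureTheory.ae_all_iff]
    intro n
    refine condExp_mono (hn_int n) (hn_int (n+1)) (Filter.Eventually.of_forall fun ω => ?_)
    exact min_le_min le_rfl (Nat.cast_le.2 (Nat.le_succ n))
  have hbdd : ∀ᵐ ω ∂P, ∀ n : ℕ,
      (P[fun ω' => min (h ω') n | m]) ω ≤ (P[h | m]) ω := by
    rw [MeasureTheory.ae_all_iff]
    intro n
    exact condExp_mono (hn_int n) hint (Filter.Eventually.of_forall fun ω => min_le_left _ _)
  have hnn' : ∀ᵐ ω ∂P, ∀ n : ℕ, 0 ≤ (P[fun ω' => min (h ω') n | m]) ω := by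
    rw [MeasureTheory.ae_all_iff]
    intro n
    exact condExp_nonneg (Filter.Eventually.of_forall fun ω => le_min (hnn ω) n.cast_nonneg)
  -- pointwise limit L
  set L : Ω → ℝ := fun ω => ⨆ n : ℕ, (P[fun ω' => min (h ω') n | m]) ω with hL
  have hTend : ∀ᵐ ω ∂P, Tendsto (fun n : ℕ => (P[fun ω' => min (h ω') n | m]) ω) atTop
      (nhds (L ω)) := by
    filter_upwards [hmono, hbdd] with ω hmo hbd
    exact tendsto_atTop_ciSup (monotone_nat_of_le_succ hmo) ⟨(P[h | m]) ω, by
      rintro x ⟨n, rfl⟩; exact hbd n⟩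
  have hLle : ∀ᵐ ω ∂P, L ω ≤ (P[h | m]) ω ∧ 0 ≤ L ω := by
    filter_upwards [hbdd, hnn'] with ω hbd hn0
    exact ⟨ciSup_le hbd, le_trans (hn0 0) (le_ciSup ⟨(P[h | m]) ω, by
      rintro x ⟨n, rfl⟩; exact hbd n⟩ 0)⟩
  have hLmeas : AEStronglyMeasurable L P :=
    aestronglyMeasurable_of_tendsto_ae atTop
      hcmeas hTend
  have hint_ch : Integrable (P[h | m]) P := integrable_condExp
  have hLint : Integrable L P := by
    refine hint_ch.abs.mono hLmeas ?_
    filter_upwards [hLle] with ω ⟨h1, h2⟩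
    rw [Real.norm_eq_abs, Real.norm_eq_abs, abs_of_nonneg h2, abs_abs]
    exact h1.trans (le_abs_self _)
  -- integrals
  have hI1 : Tendsto (fun n : ℕ => ∫ ω, (P[fun ω' => min (h ω') n | m]) ω ∂P) atTop
      (nhds (∫ ω, L ω ∂P)) := by
    refine tendsto_integral_of_dominated_convergence (fun ω => |(P[h | m]) ω|)
      hcmeas integrable_condExp.abs ?_ hTend
    intro n
    filter_upwards [hbdd, hnn'] with ω hbd hn0
    rw [Real.norm_eq_abs, abs_of_nonneg (hn0 n)]
    exact (hbd n).trans (le_abs_self _)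
  have hI2 : Tendsto (fun n : ℕ => ∫ ω, (P[fun ω' => min (h ω') n | m]) ω ∂P) atTop
      (nhds (∫ ω, h ω ∂P)) := by
    have heq : ∀ n : ℕ, ∫ ω, (P[fun ω' => min (h ω') n | m]) ω ∂P
        = ∫ ω, min (h ω) n ∂P := fun n => integral_condExp hm
    simp_rw [heq]
    refine tendsto_integral_of_dominated_convergence (fun ω => |h ω|)
      (fun n => (hn_int n).1) hint.abs ?_ ?_
    · intro n
      filter_upwards with ω
      rw [Real.norm_eq_abs, abs_of_nonneg (le_min (hnn ω) n.cast_nonneg)]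
      exact (min_le_left _ _).trans (le_abs_self _)
    · filter_upwards with ω
      refine tendsto_const_nhds.congr' ?_
      filter_upwards [eventually_ge_atTop ⌈h ω⌉₊] with n hn
      exact (min_eq_left (by exact_mod_cast (Nat.le_ceil (h ω)).trans (by exact_mod_cast hn))).symm
  have hIL : ∫ ω, L ω ∂P = ∫ ω, (P[h | m]) ω ∂P := by
    rw [integral_condExp hm]
    exact tendsto_nhds_unique hI1 hI2
  -- conclude L =ᵐ P[h|m]
  have hnonneg : 0 ≤ᵐ[P] fun ω => (P[h | m]) ω - L ω := by
    filter_upwards [hLle] with ω hle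
    simpa using hle.1
  have hint2 : Integrable (fun ω => (P[h | m]) ω - L ω) P := hint_ch.sub hLint
  have hintzero : ∫ ω, ((P[h | m]) ω - L ω) ∂P = 0 := by
    rw [integral_sub hint_ch hLint, ← hIL, sub_self]
  have hzero : (fun ω => (P[h | m]) ω - L ω) =ᵐ[P] 0 :=
    (integral_eq_zero_iff_of_nonneg_ae hnonneg hint2).1 hintzero
  filter_upwards [hTend, hzero] with ω ht hz
  have : L ω = (P[h | m]) ω := by
    have := hz
    simp only [Pi.zero_apply] at this
    linarith
  rwa [this] at ht

/-- Pointwise helper: two-sided truncation as difference of one-sided truncations. -/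
lemma trunc_eq_min_sub_min (n : ℕ) (x : ℝ) :
    max (-(n : ℝ)) (min x n) = min (max x 0) n - min (max (-x) 0) n := by
  have hn0 : (0 : ℝ) ≤ n := n.cast_nonneg
  simp only [max_def, min_def]
  split_ifs <;> linarith

/-- A.e. convergence of conditional expectations of two-sided truncations. -/
lemma tendsto_condexp_trunc {Ω : Type*} {m m0 : MeasurableSpace Ω}
    (hm : m ≤ m0) (P : Measure Ω) [IsProbabilityMeasure P] {f : Ω → ℝ}
    (hmeas : Measurable f) (hint : Integrable f P) :
    ∀ᵐ ω ∂P, Tendsto (fun n : ℕ => (P[fun ω' => max (-(n:ℝ)) (min (f ω') n) | m]) ω) atTop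
      (nhds ((P[f | m]) ω)) := by
  set fp : Ω → ℝ := fun ω => max (f ω) 0 with hfp
  set fn : Ω → ℝ := fun ω => max (-f ω) 0 with hfn
  have hfp_meas : Measurable fp := hmeas.max measurable_const
  have hfn_meas : Measurable fn := hmeas.neg.max measurable_const
  have hfp_nn : ∀ ω, 0 ≤ fp ω := fun ω => le_max_right _ _
  have hfn_nn : ∀ ω, 0 ≤ fn ω := fun ω => le_max_right _ _
  have hfp_int : Integrable fp P := hint.pos_part
  have hfn_int : Integrable fn P := hint.neg.pos_part
  have hminp_int : ∀ n : ℕ, Integrable (fun ω => min (fp ω) n) P := by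
    intro n
    refine hfp_int.mono ((hfp_meas.min measurable_const).aestronglyMeasurable) ?_
    filter_upwards with ω
    rw [Real.norm_eq_abs, Real.norm_eq_abs, abs_of_nonneg (le_min (hfp_nn ω) n.cast_nonneg),
      abs_of_nonneg (hfp_nn ω)]
    exact min_le_left _ _
  have hminn_int : ∀ n : ℕ, Integrable (fun ω => min (fn ω) n) P := by
    intro n
    refine hfn_int.mono ((hfn_meas.min measurable_const).aestronglyMeasurable) ?_
    filter_upwards with ω
    rw [Real.norm_eq_abs, Real.norm_eq_abs, abs_of_nonneg (le_min (hfn_nn ω) n.cast_nonneg),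
      abs_of_nonneg (hfn_nn ω)]
    exact min_le_left _ _
  have hsub : ∀ᵐ ω ∂P, ∀ n : ℕ,
      (P[fun ω' => max (-(n:ℝ)) (min (f ω') n) | m]) ω
        = (P[fun ω' => min (fp ω') n | m]) ω - (P[fun ω' => min (fn ω') n | m]) ω := by
    rw [MeasureTheory.ae_all_iff]
    intro n
    have h1 : (fun ω' => max (-(n:ℝ)) (min (f ω') n))
        = (fun ω' => min (fp ω') n) - (fun ω' => min (fn ω') n) := by
      funext ω
      simp only [Pi.sub_apply]
      exact trunc_eq_min_sub_min n (f ω)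
    rw [h1]
    exact condExp_sub (hminp_int n) (hminn_int n) m
  have hmain : P[f | m] =ᵐ[P] fun ω => (P[fp | m]) ω - (P[fn | m]) ω := by
    have h1 : f = fp - fn := by
      funext ω
      simp only [Pi.sub_apply, hfp, hfn, max_def]
      split_ifs <;> linarith
    nth_rewrite 1 [h1]
    exact condExp_sub hfp_int hfn_int m
  filter_upwards [tendsto_condexp_min hm P hfp_meas hfp_nn hfp_int,
    tendsto_condexp_min hm P hfn_meas hfn_nn hfn_int, hsub, hmain] with ω h1 h2 h3 h4
  rw [h4]
  exact (h1.sub h2).congr (fun n => (h3 n).symm)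

/-- `|E[f|m]| ≤ E[|f| | m]` a.e. -/
lemma abs_condexp_le' {Ω : Type*} {m m0 : MeasurableSpace Ω}
    (hm : m ≤ m0) (P : Measure Ω) [IsProbabilityMeasure P] {f : Ω → ℝ}
    (hint : Integrable f P) :
    ∀ᵐ ω ∂P, |(P[f | m]) ω| ≤ (P[fun ω' => |f ω'| | m]) ω := by
  have h1 : P[f | m] ≤ᵐ[P] P[fun ω' => |f ω'| | m] :=
    condExp_mono hint hint.abs (Filter.Eventually.of_forall fun ω => le_abs_self (f ω))
  have h2 : P[-(fun ω' => |f ω'|) | m] ≤ᵐ[P] P[f | m] :=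
    condExp_mono hint.abs.neg hint (Filter.Eventually.of_forall fun ω => neg_abs_le (f ω))
  have h3 := condExp_neg (μ := P) (m := m) (fun ω' => |f ω'|)
  filter_upwards [h1, h2, h3] with ω a b c
  rw [c] at b
  simp only [Pi.neg_apply] at b
  rw [abs_le]
  exact ⟨by linarith, a⟩

/-- Conditional Cauchy–Schwarz for a nonnegative square-integrable function:
`(E[h|m])² ≤ E[h²|m]` a.e. -/
lemma sq_condexp_le_condexp_sq {Ω : Type*} {m m0 : MeasurableSpace Ω}
    (hm : m ≤ m0) (P : Measure Ω) [IsProbabilityMeasure P] {h : Ω → ℝ}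
    (hmeas : Measurable h) (hnn : ∀ ω, 0 ≤ h ω) (h2int : Integrable (fun ω => h ω ^ 2) P)
    (hint : Integrable h P) :
    ∀ᵐ ω ∂P, ((P[h | m]) ω) ^ 2 ≤ (P[fun ω' => h ω' ^ 2 | m]) ω := by
  -- bounded case for each truncation
  have key : ∀ n : ℕ, ∀ᵐ ω ∂P,
      ((P[fun ω' => min (h ω') n | m]) ω) ^ 2 ≤ (P[fun ω' => h ω' ^ 2 | m]) ω := by
    intro n
    set g : Ω → ℝ := fun ω => min (h ω) n with hg
    have hg_meas : Measurable g := hmeas.min measurable_const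
    have hg_nn : ∀ ω, 0 ≤ g ω := fun ω => le_min (hnn ω) n.cast_nonneg
    have hg_bdd : ∀ ω, |g ω| ≤ n := fun ω => by
      rw [abs_of_nonneg (hg_nn ω)]; exact min_le_right _ _
    have hg_int : Integrable g P := by
      refine Integrable.mono' (integrable_const (n : ℝ)) hg_meas.aestronglyMeasurable ?_
      filter_upwards with ω
      rw [Real.norm_eq_abs]; exact hg_bdd ω
    set e : Ω → ℝ := P[g | m] with he
    have he_sm : StronglyMeasurable[m] e := stronglyMeasurable_condExp
    have he_sm0 : StronglyMeasurable e := he_sm.mono hm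
    have he_bdd : ∀ᵐ ω ∂P, |e ω| ≤ n := by
      filter_upwards [abs_condexp_le' hm P hg_int,
        condExp_mono hg_int.abs (integrable_const (n : ℝ))
          (Filter.Eventually.of_forall fun ω => hg_bdd ω)] with ω a b
      refine a.trans (b.trans ?_)
      rw [condExp_const hm]
    -- integrability of pieces
    have hg2_int : Integrable (fun ω => g ω ^ 2) P := by
      refine Integrable.mono' (integrable_const ((n : ℝ) ^ 2))
        (hg_meas.pow_const 2).aestronglyMeasurable ?_
      filter_upwards with ω
      rw [Real.norm_eq_abs, abs_pow]
      exact pow_le_pow_left₀ (abs_nonneg _) (hg_bdd ω) 2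
    have heg_int : Integrable (fun ω => e ω * g ω) P := by
      refine Integrable.mono' (integrable_const ((n : ℝ) * n))
        (he_sm0.aestronglyMeasurable.mul hg_meas.aestronglyMeasurable) ?_
      filter_upwards [he_bdd] with ω hb
      rw [Real.norm_eq_abs, abs_mul]
      exact mul_le_mul hb (hg_bdd ω) (abs_nonneg _) n.cast_nonneg
    have he2_int : Integrable (fun ω => e ω * e ω) P := by
      refine Integrable.mono' (integrable_const ((n : ℝ) * n))
        (he_sm0.aestronglyMeasurable.mul he_sm0.aestronglyMeasurable) ?_
      filter_upwards [he_bdd] with ω hb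
      rw [Real.norm_eq_abs, abs_mul]
      exact mul_le_mul hb hb (abs_nonneg _) n.cast_nonneg
    -- pull-out property
    have hpull : P[e * g | m] =ᵐ[P] e * P[g | m] := by
      refine condExp_stronglyMeasurable_mul_of_bound hm he_sm hg_int n ?_
      filter_upwards [he_bdd] with ω hb
      rwa [Real.norm_eq_abs]
    have hself : P[fun ω => e ω * e ω | m] = fun ω => e ω * e ω :=
      condExp_of_stronglyMeasurable hm (he_sm.mul he_sm) he2_int
    -- nonnegativity of conditional second moment of (g - e)
    have hnn2 : 0 ≤ᵐ[P] P[fun ω => (g ω - e ω) ^ 2 | m] :=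
      condExp_nonneg (Filter.Eventually.of_forall fun ω => sq_nonneg _)
    -- expansion
    have hdiff_int : Integrable ((fun ω => g ω ^ 2) - (2 : ℝ) • fun ω => e ω * g ω) P :=
      hg2_int.sub (heg_int.smul (2 : ℝ))
    have hfeq : (fun ω => (g ω - e ω) ^ 2)
        = ((fun ω => g ω ^ 2) - (2 : ℝ) • fun ω => e ω * g ω) + fun ω => e ω * e ω := by
      funext ω
      simp only [Pi.add_apply, Pi.sub_apply, Pi.smul_apply, smul_eq_mul]
      ring
    have step1 := condExp_add (μ := P) (m := m) hdiff_int he2_int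
    have step2 := condExp_sub (μ := P) (m := m) hg2_int (heg_int.smul (2 : ℝ))
    have step3 := condExp_smul (μ := P) (m := m) (2 : ℝ) (fun ω => e ω * g ω)
    have hgsq_le : P[fun ω => g ω ^ 2 | m] ≤ᵐ[P] P[fun ω' => h ω' ^ 2 | m] := by
      refine condExp_mono hg2_int h2int (Filter.Eventually.of_forall fun ω => ?_)
      exact pow_le_pow_left₀ (hg_nn ω) (min_le_left _ _) 2
    rw [hfeq] at hnn2
    have hmuleq : P[fun ω => e ω * g ω | m] = P[e * g | m] := rfl
    filter_upwards [hnn2, step1, step2, step3, hpull, hgsq_le] with ω a1 a2 a3 a4 a5 a6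
    have hs : (P[e * g | m]) ω = e ω * e ω := by rw [a5]; simp [he]
    rw [hmuleq] at a4
    simp only [Pi.add_apply, Pi.sub_apply, Pi.smul_apply, Pi.zero_apply, smul_eq_mul,
      hself] at a1 a2 a3 a4
    have hsq : e ω ^ 2 = e ω * e ω := pow_two (e ω)
    linarith [a1, a2, a3, a4, a6, hs, hsq]
  -- pass to the limit
  rw [← MeasureTheory.ae_all_iff] at key
  filter_upwards [key, tendsto_condexp_min hm P hmeas hnn hint] with ω hk ht
  refine le_of_tendsto ((ht.pow 2)) ?_
  filter_upwards with n using hk n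

/-- Main auxiliary lemma: everything except the posterior-sampler identification. -/
lemma stmt11_aux {Ω : Type*} {m m0 : MeasurableSpace Ω} (hm : m ≤ m0)
    (P : Measure Ω) [IsProbabilityMeasure P]
    (X Xhat : Ω → ℝ)
    (hX : Measurable X) (hXhat : Measurable Xhat)
    (hX2 : MemLp X 2 P) (hXhat2 : MemLp Xhat 2 P)
    (hCI : ∀ g h : ℝ → ℝ, Measurable g → Measurable h →
      (∃ C : ℝ, ∀ x, |g x| ≤ C) → (∃ C : ℝ, ∀ x, |h x| ≤ C) →
      (P[fun ω => g (X ω) * h (Xhat ω) | m]) =ᵐ[P]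
        fun ω => (P[fun ω' => g (X ω') | m]) ω *
          (P[fun ω' => h (Xhat ω') | m]) ω)
    (e1 : P[Xhat | m] =ᵐ[P] P[X | m])
    (e2 : P[fun ω => Xhat ω ^ 2 | m] =ᵐ[P] P[fun ω => X ω ^ 2 | m]) :
    (P[fun ω => (X ω - Xhat ω) ^ 2 | m]) =ᵐ[P]
      fun ω => 2 * ((P[fun ω' => X ω' ^ 2 | m]) ω - ((P[X | m]) ω) ^ 2) := by
  -- basic integrability
  have intX : Integrable X P := hX2.integrable one_le_two
  have intXhat : Integrable Xhat P := hXhat2.integrable one_le_two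
  have intX2 : Integrable (fun ω => X ω ^ 2) P := hX2.integrable_sq
  have intXhat2 : Integrable (fun ω => Xhat ω ^ 2) P := hXhat2.integrable_sq
  have intmul : Integrable (fun ω => X ω * Xhat ω) P := by
    refine Integrable.mono' (intX2.add intXhat2)
      (hX.mul hXhat).aestronglyMeasurable ?_
    filter_upwards with ω
    simp only [Pi.add_apply]
    rw [Real.norm_eq_abs, abs_le]
    constructor <;> nlinarith [sq_nonneg (X ω + Xhat ω), sq_nonneg (X ω - Xhat ω)]
  -- truncation
  set T : ℕ → ℝ → ℝ := fun n x => max (-(n : ℝ)) (min x n) with hT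
  have hT_meas : ∀ n, Measurable (T n) := fun n =>
    measurable_const.max (measurable_id.min measurable_const)
  have hT_bdd : ∀ n x, |T n x| ≤ n := by
    intro n x
    rw [abs_le]
    exact ⟨le_max_left _ _, max_le (neg_le_self n.cast_nonneg) (min_le_right _ _)⟩
  have hT_le_abs : ∀ n x, |T n x| ≤ |x| := by
    intro n x
    rw [abs_le]
    constructor
    · exact le_trans (le_min (neg_abs_le x)
        ((neg_nonpos.2 (abs_nonneg x)).trans n.cast_nonneg)) (le_max_right _ _)
    · exact max_le ((neg_nonpos.2 n.cast_nonneg).trans (abs_nonneg x))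
        ((min_le_left _ _).trans (le_abs_self x))
  have hT_tendsto : ∀ x : ℝ, Tendsto (fun n : ℕ => T n x) atTop (nhds x) := by
    intro x
    refine tendsto_const_nhds.congr' ?_
    filter_upwards [eventually_ge_atTop ⌈|x|⌉₊] with n hn
    have hxn : |x| ≤ (n : ℝ) := (Nat.le_ceil _).trans (by exact_mod_cast hn)
    have h1 : min x (n : ℝ) = x := min_eq_left ((le_abs_self x).trans hxn)
    have h2 : max (-(n : ℝ)) x = x := max_eq_right (by linarith [neg_abs_le x])
    simp only [hT]
    rw [h1, h2]
  -- integrability of truncated compositions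
  have hTf_int : ∀ (f : Ω → ℝ), Measurable f → Integrable f P →
      ∀ n : ℕ, Integrable (fun ω => T n (f ω)) P := by
    intro f hf hfint n
    refine Integrable.mono' (integrable_const ((n : ℝ)))
      (show Measurable fun ω => T n (f ω) from (hT_meas n).comp hf).aestronglyMeasurable ?_
    filter_upwards with ω
    rw [Real.norm_eq_abs]
    exact hT_bdd n (f ω)
  -- |E[Tₙ f | m]| ≤ E[|f| | m] a.e.
  have habsb : ∀ (f : Ω → ℝ), Measurable f → Integrable f P → ∀ n : ℕ,
      ∀ᵐ ω ∂P, |(P[fun ω' => T n (f ω') | m]) ω| ≤ (P[fun ω' => |f ω'| | m]) ω := by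
    intro f hf hfint n
    have h1 := abs_condexp_le' hm P (hTf_int f hf hfint n)
    have h2 : P[fun ω' => |T n (f ω')| | m] ≤ᵐ[P] P[fun ω' => |f ω'| | m] :=
      condExp_mono (hTf_int f hf hfint n).abs hfint.abs
        (Filter.Eventually.of_forall fun ω => hT_le_abs n (f ω))
    filter_upwards [h1, h2] with ω a b using a.trans b
  -- conditional Cauchy–Schwarz for |X| and |Xhat|
  have habsXsq : (fun ω => |X ω| ^ 2) = fun ω => X ω ^ 2 := funext fun ω => sq_abs _
  have habsXhatsq : (fun ω => |Xhat ω| ^ 2) = fun ω => Xhat ω ^ 2 := funext fun ω => sq_abs _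
  have csX : ∀ᵐ ω ∂P, ((P[fun ω' => |X ω'| | m]) ω) ^ 2 ≤ (P[fun ω' => X ω' ^ 2 | m]) ω := by
    have := sq_condexp_le_condexp_sq hm P hX.abs (fun ω => abs_nonneg _)
      (by rw [habsXsq]; exact intX2) intX.abs
    rwa [habsXsq] at this
  have csXhat : ∀ᵐ ω ∂P,
      ((P[fun ω' => |Xhat ω'| | m]) ω) ^ 2 ≤ (P[fun ω' => Xhat ω' ^ 2 | m]) ω := by
    have := sq_condexp_le_condexp_sq hm P hXhat.abs (fun ω => abs_nonneg _)
      (by rw [habsXhatsq]; exact intXhat2) intXhat.abs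
    rwa [habsXhatsq] at this
  have nnX : 0 ≤ᵐ[P] P[fun ω' => |X ω'| | m] :=
    condExp_nonneg (Filter.Eventually.of_forall fun ω => abs_nonneg _)
  have nnXhat : 0 ≤ᵐ[P] P[fun ω' => |Xhat ω'| | m] :=
    condExp_nonneg (Filter.Eventually.of_forall fun ω => abs_nonneg _)
  -- the cross term
  have hgs_bound : ∀ n : ℕ, ∀ᵐ ω ∂P,
      ‖(P[fun ω' => T n (X ω') | m]) ω * (P[fun ω' => T n (Xhat ω') | m]) ω‖ ≤
        ((P[fun ω' => X ω' ^ 2 | m]) ω + (P[fun ω' => Xhat ω' ^ 2 | m]) ω) / 2 := by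
    intro n
    filter_upwards [habsb X hX intX n, habsb Xhat hXhat intXhat n, csX, csXhat,
      nnX, nnXhat] with ω b1 b2 c1 c2 d1 d2
    rw [Real.norm_eq_abs, abs_mul]
    nlinarith [mul_le_mul b1 b2 (abs_nonneg _) d1,
      sq_nonneg ((P[fun ω' => |X ω'| | m]) ω - (P[fun ω' => |Xhat ω'| | m]) ω)]
  have h_int_bound_gs : Integrable
      (fun ω => ((P[fun ω' => X ω' ^ 2 | m]) ω + (P[fun ω' => Xhat ω' ^ 2 | m]) ω) / 2) P :=
    (integrable_condExp.add integrable_condExp).div_const 2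
  have key : P[fun ω => X ω * Xhat ω | m] =ᵐ[P]
      fun ω => (P[X | m]) ω * (P[Xhat | m]) ω := by
    set gs : ℕ → Ω → ℝ := fun n ω =>
      (P[fun ω' => T n (X ω') | m]) ω * (P[fun ω' => T n (Xhat ω') | m]) ω with hgs_def
    have hgs_sm : ∀ n, StronglyMeasurable[m] (gs n) := fun n =>
      stronglyMeasurable_condExp.mul stronglyMeasurable_condExp
    have hgs_int : ∀ n, Integrable (gs n) P := fun n =>
      Integrable.mono' h_int_bound_gs ((hgs_sm n).mono hm).aestronglyMeasurable (hgs_bound n)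
    have hfs_int : ∀ n : ℕ, Integrable (fun ω => T n (X ω) * T n (Xhat ω)) P := by
      intro n
      refine Integrable.mono' (integrable_const ((n : ℝ) * n))
        (show Measurable fun ω => T n (X ω) * T n (Xhat ω) from
          ((hT_meas n).comp hX).mul ((hT_meas n).comp hXhat)).aestronglyMeasurable ?_
      filter_upwards with ω
      rw [Real.norm_eq_abs, abs_mul]
      exact mul_le_mul (hT_bdd n (X ω)) (hT_bdd n (Xhat ω)) (abs_nonneg _) n.cast_nonneg
    have hfs : ∀ᵐ ω ∂P, Tendsto (fun n : ℕ => T n (X ω) * T n (Xhat ω)) atTop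
        (nhds (X ω * Xhat ω)) :=
      Filter.Eventually.of_forall fun ω => (hT_tendsto (X ω)).mul (hT_tendsto (Xhat ω))
    have hgs : ∀ᵐ ω ∂P, Tendsto (fun n : ℕ => gs n ω) atTop
        (nhds ((P[X | m]) ω * (P[Xhat | m]) ω)) := by
      filter_upwards [tendsto_condexp_trunc hm P hX intX,
        tendsto_condexp_trunc hm P hXhat intXhat] with ω h1 h2
      exact h1.mul h2
    have h_int_bound_fs : Integrable (fun ω => |X ω| * |Xhat ω|) P := by
      have := intmul.abs
      simpa [abs_mul] using this
    have hfs_bound : ∀ n : ℕ, ∀ᵐ ω ∂P,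
        ‖T n (X ω) * T n (Xhat ω)‖ ≤ |X ω| * |Xhat ω| := by
      intro n
      filter_upwards with ω
      rw [Real.norm_eq_abs, abs_mul]
      exact mul_le_mul (hT_le_abs n (X ω)) (hT_le_abs n (Xhat ω)) (abs_nonneg _) (abs_nonneg _)
    have hfg : ∀ n : ℕ, P[fun ω => T n (X ω) * T n (Xhat ω) | m] =ᵐ[P] P[gs n | m] := by
      intro n
      rw [condExp_of_stronglyMeasurable hm (hgs_sm n) (hgs_int n)]
      exact hCI (T n) (T n) (hT_meas n) (hT_meas n) ⟨n, hT_bdd n⟩ ⟨n, hT_bdd n⟩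
    have hconc := tendsto_condExp_unique (μ := P) (m := m)
      (fun n ω => T n (X ω) * T n (Xhat ω)) gs
      (fun ω => X ω * Xhat ω) (fun ω => (P[X | m]) ω * (P[Xhat | m]) ω)
      hfs_int hgs_int hfs hgs
      (fun ω => |X ω| * |Xhat ω|) h_int_bound_fs
      (fun ω => ((P[fun ω' => X ω' ^ 2 | m]) ω + (P[fun ω' => Xhat ω' ^ 2 | m]) ω) / 2)
      h_int_bound_gs hfs_bound hgs_bound hfg
    -- identify the condexp of the product of condexps
    have hg_sm : StronglyMeasurable[m] (fun ω => (P[X | m]) ω * (P[Xhat | m]) ω) :=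
      stronglyMeasurable_condExp.mul stronglyMeasurable_condExp
    have hg_int : Integrable (fun ω => (P[X | m]) ω * (P[Xhat | m]) ω) P := by
      refine Integrable.mono' h_int_bound_gs (hg_sm.mono hm).aestronglyMeasurable ?_
      filter_upwards [abs_condexp_le' hm P intX, abs_condexp_le' hm P intXhat, csX, csXhat,
        nnX, nnXhat] with ω b1 b2 c1 c2 d1 d2
      rw [Real.norm_eq_abs, abs_mul]
      nlinarith [mul_le_mul b1 b2 (abs_nonneg _) d1,
        sq_nonneg ((P[fun ω' => |X ω'| | m]) ω - (P[fun ω' => |Xhat ω'| | m]) ω)]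
    rw [condExp_of_stronglyMeasurable hm hg_sm hg_int] at hconc
    exact hconc
  -- expansion of the square
  have hfeq : (fun ω => (X ω - Xhat ω) ^ 2)
      = ((fun ω => X ω ^ 2) - (2 : ℝ) • fun ω => X ω * Xhat ω) + fun ω => Xhat ω ^ 2 := by
    funext ω
    simp only [Pi.add_apply, Pi.sub_apply, Pi.smul_apply, smul_eq_mul]
    ring
  have step1 := condExp_add (μ := P) (m := m) (intX2.sub (intmul.smul (2 : ℝ))) intXhat2
  have step2 := condExp_sub (μ := P) (m := m) intX2 (intmul.smul (2 : ℝ))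
  have step3 := condExp_smul (μ := P) (m := m) (2 : ℝ) (fun ω => X ω * Xhat ω)
  rw [hfeq]
  filter_upwards [step1, step2, step3, key, e1, e2] with ω a1 a2 a3 a4 a5 a6
  simp only [Pi.add_apply, Pi.sub_apply, Pi.smul_apply, smul_eq_mul] at a1 a2 a3 a4
  rw [a1, a2, a3, a4, a5, a6]
  ring
/-- Let `X, X̂` be square-integrable real random variables and `Y` a random
vector such that `X` and `X̂` are conditionally independent given `σ(Y)`. If moreover `X̂` is a
posterior sampler, i.e. `p_{X̂|Y}(·|y) = p_{X|Y}(·|y)` for `p_Y`-almost every `y`, then almost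
surely `E[(X - X̂)²|Y] = 2·(E[X²|Y] - (E[X|Y])²)`: the conditional mean squared error equals
twice the conditional variance of `X` given `Y`. -/
theorem stmt11
    {Ω F : Type*} [MeasurableSpace Ω]
    [NormedAddCommGroup F] [NormedSpace ℝ F] [FiniteDimensional ℝ F]
    [mF : MeasurableSpace F] [BorelSpace F]
    (P : Measure Ω) [IsProbabilityMeasure P]
    (X Xhat : Ω → ℝ) (Y : Ω → F)
    (hX : Measurable X) (hXhat : Measurable Xhat) (hY : Measurable Y)
    (hX2 : MemLp X 2 P) (hXhat2 : MemLp Xhat 2 P)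
    (hCI : ∀ g h : ℝ → ℝ, Measurable g → Measurable h →
      (∃ C : ℝ, ∀ x, |g x| ≤ C) → (∃ C : ℝ, ∀ x, |h x| ≤ C) →
      (P[fun ω => g (X ω) * h (Xhat ω) | mF.comap Y]) =ᵐ[P]
        fun ω => (P[fun ω' => g (X ω') | mF.comap Y]) ω *
          (P[fun ω' => h (Xhat ω') | mF.comap Y]) ω)
    (hps : ∀ᵐ y ∂(P.map Y), condDistrib Xhat Y P y = condDistrib X Y P y) :
    (P[fun ω => (X ω - Xhat ω) ^ 2 | mF.comap Y]) =ᵐ[P]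
      fun ω => 2 * ((P[fun ω' => X ω' ^ 2 | mF.comap Y]) ω -
        ((P[X | mF.comap Y]) ω) ^ 2) := by
  have hYae : ∀ᵐ ω ∂P, condDistrib Xhat Y P (Y ω) = condDistrib X Y P (Y ω) :=
    ae_of_ae_map hY.aemeasurable hps
  have intX : Integrable X P := hX2.integrable one_le_two
  have intXhat : Integrable Xhat P := hXhat2.integrable one_le_two
  have intX2 : Integrable (fun ω => X ω ^ 2) P := hX2.integrable_sq
  have intXhat2 : Integrable (fun ω => Xhat ω ^ 2) P := hXhat2.integrable_sq
  have e1 : P[Xhat | mF.comap Y] =ᵐ[P] P[X | mF.comap Y] := by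
    have h1 := condExp_ae_eq_integral_condDistrib' (μ := P) hY intXhat
    have h2 := condExp_ae_eq_integral_condDistrib' (μ := P) hY intX
    refine h1.trans (.trans ?_ h2.symm)
    filter_upwards [hYae] with ω hω
    rw [hω]
  have e2 : P[fun ω => Xhat ω ^ 2 | mF.comap Y] =ᵐ[P] P[fun ω => X ω ^ 2 | mF.comap Y] := by
    have h1 := condExp_ae_eq_integral_condDistrib (μ := P) (X := Y) (Y := Xhat) hY
      hXhat.aemeasurable (measurable_id.pow_const 2).stronglyMeasurable intXhat2
    have h2 := condExp_ae_eq_integral_condDistrib (μ := P) (X := Y) (Y := X) hY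
      hX.aemeasurable (measurable_id.pow_const 2).stronglyMeasurable intX2
    refine h1.trans (.trans ?_ h2.symm)
    filter_upwards [hYae] with ω hω
    rw [hω]
  exact stmt11_aux hY.comap_le P X Xhat hX hXhat hX2 hXhat2 hCI e1 e2
end
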